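/- Let X = (X_1,...,X_m) be a POVM on a finite-dimensional complex Hilbert space and ρ a density operator. Then H(X,ρ) ≥ -log₂ max_{i,j} ‖X_i^{1/2} X_j^{1/2}‖, where H(X,ρ) = -Σ_i Tr(ρX_i) log₂ Tr(ρX_i). -/

import Mathlib

open scoped InnerProduct ComplexConjugate

local notation "⟪" x ", " y "⟫" => @inner ℂ _ _ x y

/-- Trace as a sum of inner products over an orthonormal basis. -/
lemma trace_eq_sum_inner' {H : Type*} [NormedAddCommGroup H] [InnerProductSpace ℂ H]
    [FiniteDimensional ℂ H] {ι : Type*} [Fintype ι] [DecidableEq ι]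
    (b : OrthonormalBasis ι ℂ H) (T : H →ₗ[ℂ] H) :
    LinearMap.trace ℂ H T = ∑ i, ⟪b i, T (b i)⟫ := by
  rw [LinearMap.trace_eq_matrix_trace ℂ b.toBasis, Matrix.trace]
  congr 1
  ext i
  rw [Matrix.diag_apply, LinearMap.toMatrix_apply, b.coe_toBasis,
    b.coe_toBasis_repr_apply, b.repr_apply_apply]

/-- The elementary entropy bound. -/
lemma entropy_ge_aux {m : ℕ} (p : Fin m → ℝ) (c : ℝ) (h0 : ∀ i, 0 ≤ p i)
    (hc : ∀ i, p i ≤ c) (hs : ∑ i, p i = 1) :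
    (-∑ i, p i * Real.logb 2 (p i)) ≥ -Real.logb 2 c := by
  have hcpos : 0 < c := by
    by_contra hcon
    push_neg at hcon
    have : ∀ i, p i = 0 := fun i => le_antisymm ((hc i).trans hcon) (h0 i)
    simp [this] at hs
  rw [ge_iff_le, neg_le_neg_iff]
  calc ∑ i, p i * Real.logb 2 (p i) ≤ ∑ i, p i * Real.logb 2 c := by
        apply Finset.sum_le_sum
        intro i _
        rcases eq_or_lt_of_le (h0 i) with h | h
        · simp [← h]
        · exact mul_le_mul_of_nonneg_left
            (Real.logb_le_logb_of_le one_lt_two h (hc i)) (h0 i)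
    _ = Real.logb 2 c := by rw [← Finset.sum_mul, hs, one_mul]

theorem entropic_uncertainty_single_povm
    {H : Type*} [NormedAddCommGroup H] [InnerProductSpace ℂ H] [FiniteDimensional ℂ H]
    {m : ℕ} (X : Fin m → H →L[ℂ] H)
    (hX : ∀ i, (X i).IsPositive) (hXsum : ∑ i, X i = 1)
    (SX : Fin m → H →L[ℂ] H) (hSX : ∀ i, (SX i).IsPositive ∧ SX i ∘L SX i = X i)
    (ρ : H →L[ℂ] H) (hρpos : ρ.IsPositive)
    (hρtr : LinearMap.trace ℂ H (ρ : H →ₗ[ℂ] H) = 1) :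
    (-∑ i, (LinearMap.trace ℂ H ((ρ ∘L X i : H →L[ℂ] H) : H →ₗ[ℂ] H)).re *
        Real.logb 2 (LinearMap.trace ℂ H ((ρ ∘L X i : H →L[ℂ] H) : H →ₗ[ℂ] H)).re) ≥
    -Real.logb 2 (sSup {r : ℝ | ∃ i j, r = ‖SX i ∘L SX j‖}) := by
  classical
  set c : ℝ := sSup {r : ℝ | ∃ i j, r = ‖SX i ∘L SX j‖} with hcdef
  set p : Fin m → ℝ :=
    fun i => (LinearMap.trace ℂ H ((ρ ∘L X i : H →L[ℂ] H) : H →ₗ[ℂ] H)).re with hpdef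
  -- eigenbasis of ρ
  have hsym : LinearMap.IsSymmetric (ρ : H →ₗ[ℂ] H) := hρpos.isSelfAdjoint.isSymmetric
  set n := Module.finrank ℂ H with hn
  have hfin : Module.finrank ℂ H = n := rfl
  set b := hsym.eigenvectorBasis hfin with hb
  set lam := hsym.eigenvalues hfin with hlam
  have happ : ∀ k, ρ (b k) = (lam k : ℂ) • b k := fun k => hsym.apply_eigenvectorBasis hfin k
  -- trace formula
  have htr : ∀ i : Fin m, (LinearMap.trace ℂ H ((ρ ∘L X i : H →L[ℂ] H) : H →ₗ[ℂ] H))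
      = ∑ k, (lam k : ℂ) * ⟪b k, X i (b k)⟫ := by
    intro i
    have h1 : ((ρ ∘L X i : H →L[ℂ] H) : H →ₗ[ℂ] H)
        = (ρ : H →ₗ[ℂ] H) * ((X i : H →ₗ[ℂ] H)) := rfl
    rw [h1, LinearMap.trace_mul_comm, trace_eq_sum_inner' b]
    apply Finset.sum_congr rfl
    intro k _
    simp only [Module.End.mul_apply, ContinuousLinearMap.coe_coe]
    rw [happ k, map_smul, inner_smul_right]
  -- eigenvalues nonneg
  have hlam0 : ∀ k, 0 ≤ lam k := by
    intro k
    have h := hρpos.inner_nonneg_right (b k)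
    rw [happ k, inner_smul_right] at h
    have hbk : ⟪b k, b k⟫ = 1 := by
      rw [@inner_self_eq_norm_sq_to_K ℂ, b.orthonormal.1 k]
      norm_num
    rw [hbk, mul_one] at h
    simpa using h
  -- diagonal matrix elements of X i
  have hXd0 : ∀ (i : Fin m) k, 0 ≤ (⟪b k, X i (b k)⟫).re := fun i k =>
    by simpa using (Complex.le_def.1 ((hX i).inner_nonneg_right (b k))).1
  have hXd1 : ∀ (i : Fin m) k, (⟪b k, X i (b k)⟫).re ≤ ‖X i‖ := by
    intro i k
    calc (⟪b k, X i (b k)⟫).re ≤ ‖⟪b k, X i (b k)⟫‖ :=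
          Complex.re_le_norm _
      _ ≤ ‖b k‖ * ‖X i (b k)‖ := norm_inner_le_norm _ _
      _ ≤ ‖b k‖ * (‖X i‖ * ‖b k‖) :=
          mul_le_mul_of_nonneg_left ((X i).le_opNorm _) (norm_nonneg _)
      _ = ‖X i‖ := by rw [b.orthonormal.1 k, one_mul, mul_one]
  -- p i as a real sum
  have hpre : ∀ i, p i = ∑ k, lam k * (⟪b k, X i (b k)⟫).re := by
    intro i
    rw [hpdef]
    simp only [htr i, Complex.re_sum]
    apply Finset.sum_congr rfl
    intro k _
    simp [Complex.mul_re, Complex.ofReal_re, Complex.ofReal_im]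
  -- p i nonneg
  have hp0 : ∀ i, 0 ≤ p i := by
    intro i
    rw [hpre i]
    exact Finset.sum_nonneg fun k _ => mul_nonneg (hlam0 k) (hXd0 i k)
  -- sum of eigenvalues is 1
  have hlamsum : ∑ k, lam k = 1 := by
    have h1 : LinearMap.trace ℂ H (ρ : H →ₗ[ℂ] H) = ∑ k, (lam k : ℂ) := by
      rw [trace_eq_sum_inner' b]
      apply Finset.sum_congr rfl
      intro k _
      rw [show (ρ : H →ₗ[ℂ] H) (b k) = ρ (b k) from rfl, happ k, inner_smul_right]
      have hbk : ⟪b k, b k⟫ = 1 := by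
        rw [@inner_self_eq_norm_sq_to_K ℂ, b.orthonormal.1 k]
        norm_num
      rw [hbk, mul_one]
    rw [hρtr] at h1
    have := congrArg Complex.re h1.symm
    simpa [Complex.re_sum] using this
  -- p i ≤ ‖X i‖
  have hpX : ∀ i, p i ≤ ‖X i‖ := by
    intro i
    rw [hpre i]
    calc ∑ k, lam k * (⟪b k, X i (b k)⟫).re ≤ ∑ k, lam k * ‖X i‖ :=
          Finset.sum_le_sum fun k _ =>
            mul_le_mul_of_nonneg_left (hXd1 i k) (hlam0 k)
      _ = ‖X i‖ := by rw [← Finset.sum_mul, hlamsum, one_mul]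
  -- the set is bounded above
  have hbdd : BddAbove {r : ℝ | ∃ i j, r = ‖SX i ∘L SX j‖} := by
    have : {r : ℝ | ∃ i j, r = ‖SX i ∘L SX j‖}
        = Set.range (fun q : Fin m × Fin m => ‖SX q.1 ∘L SX q.2‖) := by
      ext r
      constructor
      · rintro ⟨i, j, rfl⟩; exact ⟨(i, j), rfl⟩
      · rintro ⟨⟨i, j⟩, rfl⟩; exact ⟨i, j, rfl⟩
    rw [this]
    exact (Set.finite_range _).bddAbove
  -- ‖X i‖ ≤ c
  have hXc : ∀ i, ‖X i‖ ≤ c := by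
    intro i
    rw [← (hSX i).2]
    exact le_csSup hbdd ⟨i, i, rfl⟩
  have hpc : ∀ i, p i ≤ c := fun i => (hpX i).trans (hXc i)
  -- sum of p is 1
  have hpsum : ∑ i, p i = 1 := by
    have h1 : ∑ i, LinearMap.trace ℂ H ((ρ ∘L X i : H →L[ℂ] H) : H →ₗ[ℂ] H)
        = LinearMap.trace ℂ H (ρ : H →ₗ[ℂ] H) := by
      rw [← map_sum]
      congr 1
      have : ∑ i, (ρ ∘L X i) = ρ ∘L (∑ i, X i) := by
        rw [← ContinuousLinearMap.comp_finset_sum]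
      rw [show (∑ i, ((ρ ∘L X i : H →L[ℂ] H) : H →ₗ[ℂ] H))
          = ((∑ i, (ρ ∘L X i : H →L[ℂ] H) : H →L[ℂ] H) : H →ₗ[ℂ] H) by
        push_cast [ContinuousLinearMap.coe_sum]; rfl]
      rw [this, hXsum]
      exact congrArg _ (mul_one ρ)
    have := congrArg Complex.re h1
    rw [hρtr] at this
    simpa [Complex.re_sum, hpdef] using this
  exact entropy_ge_aux p c hp0 hpc hpsum
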